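/- Let n ≥ 5 and let B ∈ M_{n,3}(F) be the matrix whose first column is e₁ − e₅, whose second column is e₂ − e₄, and whose third column is zero. Then rank(B) = 2, and nevertheless for every A ∈ M_{n,3}(F) there exist a₀, a₁ ∈ F such that det_{n,3}(A + λB) = a₀ + a₁λ for all λ ∈ F. -/

import Mathlib

/- The Cullis determinant of an `n × k` matrix: the alternating sum of its maximal
(`k × k`) minors, indexed by strictly increasing selections of `k` rows. -/
open Classical in
noncomputable def cullisDet {F : Type*} [Field F] {n k : ℕ} (X : Matrix (Fin n) (Fin k) F) : F :=
  ∑ f ∈ Finset.univ.filter (fun f : Fin k → Fin n => StrictMono f),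
    (-1 : F) ^ (∑ α : Fin k, ((f α : ℕ) + (α : ℕ))) * (X.submatrix f id).det

/-- The counterexample matrix of STATEMENT 15: first column `e₁ − e₅`, second column
`e₂ − e₄`, third column zero (indices `1`-indexed, so `0`-indexed rows `0,4` and `1,3`). -/
def counterB (F : Type*) [Field F] (n : ℕ) : Matrix (Fin n) (Fin 3) F :=
  fun i j =>
    if (j : ℕ) = 0 then (if (i : ℕ) = 0 then 1 else if (i : ℕ) = 4 then -1 else 0)
    else if (j : ℕ) = 1 then (if (i : ℕ) = 1 then 1 else if (i : ℕ) = 3 then -1 else 0)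
    else 0

section Aux

open Finset Matrix

lemma sum_ite2 {F : Type*} [Field F] {n : ℕ} {a b : Fin n} (hab : a ≠ b) (p q : F)
    (s : Finset (Fin n)) (g : Fin n → F) :
    ∑ x ∈ s, (if x = a then p else if x = b then q else 0) * g x
      = (if a ∈ s then p * g a else 0) + (if b ∈ s then q * g b else 0) := by
  rw [← Finset.sum_ite_eq' s a (fun x => p * g x), ← Finset.sum_ite_eq' s b (fun x => q * g x),
    ← Finset.sum_add_distrib]
  refine Finset.sum_congr rfl fun x _ => ?_
  by_cases h1 : x = a <;> by_cases h2 : x = b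
  · exact absurd (h1.symm.trans h2) hab
  · simp [h1, h2, hab]
  · simp [h1, h2, Ne.symm hab]
  · simp [h1, h2]

lemma strictMono_fin3_iff {α : Type*} [Preorder α] (f : Fin 3 → α) :
    StrictMono f ↔ f 0 < f 1 ∧ f 1 < f 2 := by
  constructor
  · intro h; exact ⟨h (by decide), h (by decide)⟩
  · rintro ⟨h01, h12⟩ a b hab
    fin_cases a <;> fin_cases b <;> simp_all <;>
      first | exact h01.trans h12 | exact h01 | exact h12

open Classical in
lemma sum_strictMono_fin3 {M : Type*} [AddCommMonoid M] {n : ℕ} (G : Fin n → Fin n → Fin n → M) :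
    (∑ f ∈ Finset.univ.filter (fun f : Fin 3 → Fin n => StrictMono f), G (f 0) (f 1) (f 2))
      = ∑ i : Fin n, ∑ j ∈ Ioi i, ∑ l ∈ Ioi j, G i j l := by
  classical
  simp only [Finset.sum_sigma']
  refine Finset.sum_nbij' (fun f => ⟨f 0, f 1, f 2⟩) (fun p => ![p.1, p.2.1, p.2.2]) ?_ ?_ ?_ ?_ ?_
  · intro f hf
    simp only [Finset.mem_filter, Finset.mem_univ, true_and] at hf
    rw [strictMono_fin3_iff] at hf
    simp [Finset.mem_sigma, Finset.mem_Ioi, hf.1, hf.2]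
  · intro p hp
    simp only [Finset.mem_sigma, Finset.mem_univ, Finset.mem_Ioi, true_and] at hp
    simp only [Finset.mem_filter, Finset.mem_univ, true_and]
    rw [strictMono_fin3_iff]
    exact ⟨by simpa using hp.1, by simpa using hp.2⟩
  · intro f _
    funext x
    fin_cases x <;> rfl
  · intro p _
    rfl
  · intro f _
    rfl

lemma quad_zero {F : Type*} [Field F] {n : ℕ} (k0 k1 k2 k3 k4 : Fin n)
    (e0 : (k0 : ℕ) = 0) (e1 : (k1 : ℕ) = 1) (e2 : (k2 : ℕ) = 2)
    (e3 : (k3 : ℕ) = 3) (e4 : (k4 : ℕ) = 4)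
    (z c0 c1 : Fin n → F)
    (hc0 : ∀ i, c0 i = if i = k0 then 1 else if i = k4 then -1 else 0)
    (hc1 : ∀ i, c1 i = if i = k1 then -1 else if i = k3 then 1 else 0) :
    (∑ i : Fin n, ∑ j ∈ Ioi i, ∑ l ∈ Ioi j,
      ((c0 i * c1 j - c1 i * c0 j) * z l
        - (c0 i * c1 l - c1 i * c0 l) * z j
        + (c0 j * c1 l - c1 j * c0 l) * z i)) = 0 := by
  have hne : ∀ {a b : Fin n}, (a : ℕ) ≠ (b : ℕ) → a ≠ b := fun h hab => h (by rw [hab])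
  have h04 : k0 ≠ k4 := hne (by omega)
  have h13 : k1 ≠ k3 := hne (by omega)
  -- collapse lemmas
  have hsum0 : ∀ (s : Finset (Fin n)) (g : Fin n → F),
      (∑ x ∈ s, c0 x * g x)
        = (if k0 ∈ s then g k0 else 0) - (if k4 ∈ s then g k4 else 0) := by
    intro s g
    have h := sum_ite2 h04 (1 : F) (-1) s g
    simp only [← hc0] at h
    rw [h]
    by_cases hh : k0 ∈ s <;> by_cases hh' : k4 ∈ s <;> simp [hh, hh'] <;> ring
  have hsum1 : ∀ (s : Finset (Fin n)) (g : Fin n → F),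
      (∑ x ∈ s, c1 x * g x)
        = (if k3 ∈ s then g k3 else 0) - (if k1 ∈ s then g k1 else 0) := by
    intro s g
    have h := sum_ite2 h13 (-1 : F) (1) s g
    simp only [← hc1] at h
    rw [h]
    by_cases hh : k1 ∈ s <;> by_cases hh' : k3 ∈ s <;> simp [hh, hh'] <;> ring
  -- tail sums of the sparse columns
  have Y0 : ∀ j : Fin n, (∑ l ∈ Ioi j, c0 l) = -(if j < k4 then (1:F) else 0) := by
    intro j
    have h := hsum0 (Ioi j) (fun _ => (1:F))
    simp only [mul_one] at h
    have hj0 : ¬ (j < k0) := by simp [Fin.lt_def, e0]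
    simp only [Finset.mem_Ioi] at h
    rw [h, if_neg hj0]
    by_cases hj4 : j < k4 <;> simp [hj4]
  have Y1 : ∀ j : Fin n, (∑ l ∈ Ioi j, c1 l)
      = (if j < k3 then (1:F) else 0) - (if j < k1 then (1:F) else 0) := by
    intro j
    have h := hsum1 (Ioi j) (fun _ => (1:F))
    simp only [mul_one] at h
    simp only [Finset.mem_Ioi] at h
    rw [h]
  -- step A : collapse the innermost sum
  have stepA : ∀ i j : Fin n,
      (∑ l ∈ Ioi j, ((c0 i * c1 j - c1 i * c0 j) * z l
        - (c0 i * c1 l - c1 i * c0 l) * z j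
        + (c0 j * c1 l - c1 j * c0 l) * z i))
      = (c0 i * c1 j - c1 i * c0 j) * (∑ l ∈ Ioi j, z l)
        + (c0 j * z i - c0 i * z j) * ((if j < k3 then (1:F) else 0) - (if j < k1 then (1:F) else 0))
        + (c1 i * z j - c1 j * z i) * (-(if j < k4 then (1:F) else 0)) := by
    intro i j
    have e : ∀ l ∈ Ioi j, ((c0 i * c1 j - c1 i * c0 j) * z l
        - (c0 i * c1 l - c1 i * c0 l) * z j
        + (c0 j * c1 l - c1 j * c0 l) * z i)
        = (c0 i * c1 j - c1 i * c0 j) * z l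
          + ((c0 j * z i - c0 i * z j) * c1 l + (c1 i * z j - c1 j * z i) * c0 l) :=
      fun l _ => by ring
    rw [Finset.sum_congr rfl e, Finset.sum_add_distrib, Finset.sum_add_distrib,
      ← Finset.mul_sum, ← Finset.mul_sum, ← Finset.mul_sum, Y0 j, Y1 j]
    ring
  -- step B : collapse the middle sum
  have h43 : ¬ (k4 < k3) := by simp [Fin.lt_def, e3, e4]
  have h41 : ¬ (k4 < k1) := by simp [Fin.lt_def, e1, e4]
  have h34 : k3 < k4 := by simp [Fin.lt_def, e3, e4]
  have h14 : k1 < k4 := by simp [Fin.lt_def, e1, e4]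
  have h03 : k0 < k3 := by simp [Fin.lt_def, e0, e3]
  have h01 : k0 < k1 := by simp [Fin.lt_def, e0, e1]
  have h31 : ¬ (k3 < k1) := by simp [Fin.lt_def, e1, e3]
  have h13' : k1 < k3 := by simp [Fin.lt_def, e1, e3]
  have h11 : ¬ (k1 < k1) := lt_irrefl _
  have h33 : ¬ (k3 < k3) := lt_irrefl _
  have h30 : ¬ (k3 < k0) := by simp [Fin.lt_def, e0, e3]
  have h10 : ¬ (k1 < k0) := by simp [Fin.lt_def, e0, e1]
  have stepB : ∀ i : Fin n,
      (∑ j ∈ Ioi i, ((c0 i * c1 j - c1 i * c0 j) * (∑ l ∈ Ioi j, z l)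
        + (c0 j * z i - c0 i * z j) * ((if j < k3 then (1:F) else 0) - (if j < k1 then (1:F) else 0))
        + (c1 i * z j - c1 j * z i) * (-(if j < k4 then (1:F) else 0))))
      = (if i < k4 then c1 i * (∑ l ∈ Ioi k4, z l) else 0)
        + ((if i < k3 then c0 i * (∑ l ∈ Ioi k3, z l) + z i else 0)
            - (if i < k1 then c0 i * (∑ l ∈ Ioi k1, z l) + z i else 0))
        + ∑ j ∈ Ioi i, z j * (-(c0 i) * ((if j < k3 then (1:F) else 0) - (if j < k1 then (1:F) else 0))
            - c1 i * (if j < k4 then (1:F) else 0)) := by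
    intro i
    have e : ∀ j ∈ Ioi i, ((c0 i * c1 j - c1 i * c0 j) * (∑ l ∈ Ioi j, z l)
        + (c0 j * z i - c0 i * z j) * ((if j < k3 then (1:F) else 0) - (if j < k1 then (1:F) else 0))
        + (c1 i * z j - c1 j * z i) * (-(if j < k4 then (1:F) else 0)))
        = c0 j * (-(c1 i) * (∑ l ∈ Ioi j, z l)
              + z i * ((if j < k3 then (1:F) else 0) - (if j < k1 then (1:F) else 0)))
          + (c1 j * (c0 i * (∑ l ∈ Ioi j, z l) + z i * (if j < k4 then (1:F) else 0))
          + z j * (-(c0 i) * ((if j < k3 then (1:F) else 0) - (if j < k1 then (1:F) else 0))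
            - c1 i * (if j < k4 then (1:F) else 0))) :=
      fun j _ => by ring
    rw [Finset.sum_congr rfl e, Finset.sum_add_distrib, Finset.sum_add_distrib,
      hsum0 (Ioi i) _, hsum1 (Ioi i) _]
    simp only [Finset.mem_Ioi]
    have hik0 : ¬ (i < k0) := by simp [Fin.lt_def, e0]
    rw [if_neg hik0]
    by_cases hi4 : i < k4 <;> by_cases hi3 : i < k3 <;> by_cases hi1 : i < k1 <;>
      simp only [hi4, hi3, hi1, if_true, if_false, h43, h41, h34, h14, h31, h13', h11, h33,
        if_pos, if_neg, not_false_iff] <;>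
      first
        | ring
        | (exfalso; rw [Fin.lt_def] at hi4 hi3 hi1; omega)
  -- distinctness / finset identities
  have hne01 : k0 ≠ k1 := hne (by omega)
  have hne02 : k0 ≠ k2 := hne (by omega)
  have hne12 : k1 ≠ k2 := hne (by omega)
  have hne23 : k2 ≠ k3 := hne (by omega)
  have h32 : ¬ (k3 < k2) := by simp [Fin.lt_def, e2, e3]
  have fIio1 : univ.filter (fun i : Fin n => i < k1) = {k0} := by
    ext x
    simp only [Finset.mem_filter, Finset.mem_univ, true_and, Finset.mem_singleton,
      Fin.lt_def, Fin.ext_iff, e0, e1]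
    omega
  have fIio3 : univ.filter (fun i : Fin n => i < k3) = {k0, k1, k2} := by
    ext x
    simp only [Finset.mem_filter, Finset.mem_univ, true_and, Finset.mem_insert,
      Finset.mem_singleton, Fin.lt_def, Fin.ext_iff, e0, e1, e2, e3]
    omega
  have fOoo03 : (Ioi k0).filter (fun j : Fin n => j < k3) = {k1, k2} := by
    ext x
    simp only [Finset.mem_filter, Finset.mem_Ioi, Finset.mem_insert,
      Finset.mem_singleton, Fin.lt_def, Fin.ext_iff, e0, e1, e2, e3]
    omega
  have fOoo14 : (Ioi k1).filter (fun j : Fin n => j < k4) = {k2, k3} := by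
    ext x
    simp only [Finset.mem_filter, Finset.mem_Ioi, Finset.mem_insert,
      Finset.mem_singleton, Fin.lt_def, Fin.ext_iff, e1, e2, e3, e4]
    omega
  have fIoi1 : Ioi k1 = insert k2 (insert k3 (Ioi k3)) := by
    ext x
    simp only [Finset.mem_Ioi, Finset.mem_insert, Fin.lt_def, Fin.ext_iff, e1, e2, e3]
    omega
  -- the four outer pieces
  have hS1 : (∑ i : Fin n, (if i < k4 then c1 i * (∑ l ∈ Ioi k4, z l) else 0)) = 0 := by
    have e : ∀ i ∈ (univ : Finset (Fin n)),
        (if i < k4 then c1 i * (∑ l ∈ Ioi k4, z l) else 0)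
          = c1 i * (if i < k4 then (∑ l ∈ Ioi k4, z l) else 0) := by
      intro i _; by_cases h : i < k4 <;> simp [h]
    rw [Finset.sum_congr rfl e, hsum1 univ _]
    simp [h34, h14]
  have hS2 : (∑ i : Fin n, (if i < k3 then c0 i * (∑ l ∈ Ioi k3, z l) + z i else 0))
      = (∑ l ∈ Ioi k3, z l) + (z k0 + (z k1 + z k2)) := by
    have e : ∀ i ∈ (univ : Finset (Fin n)),
        (if i < k3 then c0 i * (∑ l ∈ Ioi k3, z l) + z i else 0)
          = c0 i * (if i < k3 then (∑ l ∈ Ioi k3, z l) else 0) + (if i < k3 then z i else 0) := by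
      intro i _; by_cases h : i < k3 <;> simp [h]
    rw [Finset.sum_congr rfl e, Finset.sum_add_distrib, hsum0 univ _, ← Finset.sum_filter,
      fIio3, Finset.sum_insert (by simp [hne01, hne02]),
      Finset.sum_insert (by simp [hne12]), Finset.sum_singleton]
    simp [h03, h43]
  have hS3 : (∑ i : Fin n, (if i < k1 then c0 i * (∑ l ∈ Ioi k1, z l) + z i else 0))
      = (∑ l ∈ Ioi k1, z l) + z k0 := by
    have e : ∀ i ∈ (univ : Finset (Fin n)),
        (if i < k1 then c0 i * (∑ l ∈ Ioi k1, z l) + z i else 0)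
          = c0 i * (if i < k1 then (∑ l ∈ Ioi k1, z l) else 0) + (if i < k1 then z i else 0) := by
      intro i _; by_cases h : i < k1 <;> simp [h]
    rw [Finset.sum_congr rfl e, Finset.sum_add_distrib, hsum0 univ _, ← Finset.sum_filter,
      fIio1, Finset.sum_singleton]
    simp [h01, h41]
  -- inner tail pieces
  have hU0 : (∑ j ∈ Ioi k0, -(z j * ((if j < k3 then (1:F) else 0) - (if j < k1 then (1:F) else 0))))
      = -(z k1 + z k2) := by
    have e : ∀ j ∈ Ioi k0,
        -(z j * ((if j < k3 then (1:F) else 0) - (if j < k1 then (1:F) else 0)))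
          = -(if j < k3 then z j else 0) := by
      intro j hj
      have hj1 : ¬ (j < k1) := by
        simp only [Finset.mem_Ioi, Fin.lt_def, e0] at hj
        simp only [Fin.lt_def, e1]; omega
      by_cases h : j < k3 <;> simp [h, hj1]
    rw [Finset.sum_congr rfl e, Finset.sum_neg_distrib, ← Finset.sum_filter, fOoo03,
      Finset.sum_insert (by simp [hne12]), Finset.sum_singleton]
  have hU4 : (∑ j ∈ Ioi k4, -(z j * ((if j < k3 then (1:F) else 0) - (if j < k1 then (1:F) else 0))))
      = 0 := by
    refine Finset.sum_eq_zero fun j hj => ?_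
    simp only [Finset.mem_Ioi, Fin.lt_def, e4] at hj
    have hj3 : ¬ (j < k3) := by simp only [Fin.lt_def, e3]; omega
    have hj1 : ¬ (j < k1) := by simp only [Fin.lt_def, e1]; omega
    simp [hj3, hj1]
  have hV3 : (∑ j ∈ Ioi k3, -(z j * (if j < k4 then (1:F) else 0))) = 0 := by
    refine Finset.sum_eq_zero fun j hj => ?_
    simp only [Finset.mem_Ioi, Fin.lt_def, e3] at hj
    have hj4 : ¬ (j < k4) := by simp only [Fin.lt_def, e4]; omega
    simp [hj4]
  have hV1 : (∑ j ∈ Ioi k1, -(z j * (if j < k4 then (1:F) else 0))) = -(z k2 + z k3) := by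
    have e : ∀ j ∈ Ioi k1,
        -(z j * (if j < k4 then (1:F) else 0)) = -(if j < k4 then z j else 0) := by
      intro j _; by_cases h : j < k4 <;> simp [h]
    rw [Finset.sum_congr rfl e, Finset.sum_neg_distrib, ← Finset.sum_filter, fOoo14,
      Finset.sum_insert (by simp [hne23]), Finset.sum_singleton]
  have hS4 : (∑ i : Fin n, ∑ j ∈ Ioi i,
      z j * (-(c0 i) * ((if j < k3 then (1:F) else 0) - (if j < k1 then (1:F) else 0))
        - c1 i * (if j < k4 then (1:F) else 0))) = z k3 - z k1 := by
    have e : ∀ i ∈ (univ : Finset (Fin n)),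
        (∑ j ∈ Ioi i,
          z j * (-(c0 i) * ((if j < k3 then (1:F) else 0) - (if j < k1 then (1:F) else 0))
            - c1 i * (if j < k4 then (1:F) else 0)))
        = c0 i * (∑ j ∈ Ioi i, -(z j * ((if j < k3 then (1:F) else 0) - (if j < k1 then (1:F) else 0))))
          + c1 i * (∑ j ∈ Ioi i, -(z j * (if j < k4 then (1:F) else 0))) := by
      intro i _
      rw [Finset.mul_sum, Finset.mul_sum, ← Finset.sum_add_distrib]
      exact Finset.sum_congr rfl fun j _ => by ring
    rw [Finset.sum_congr rfl e, Finset.sum_add_distrib, hsum0 univ _, hsum1 univ _]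
    simp only [Finset.mem_univ, if_true]
    simp only [hU0, hU4, hV3, hV1]
    ring
  -- put everything together
  calc (∑ i : Fin n, ∑ j ∈ Ioi i, ∑ l ∈ Ioi j,
      ((c0 i * c1 j - c1 i * c0 j) * z l
        - (c0 i * c1 l - c1 i * c0 l) * z j
        + (c0 j * c1 l - c1 j * c0 l) * z i))
      = ∑ i : Fin n,
        ((if i < k4 then c1 i * (∑ l ∈ Ioi k4, z l) else 0)
        + ((if i < k3 then c0 i * (∑ l ∈ Ioi k3, z l) + z i else 0)
            - (if i < k1 then c0 i * (∑ l ∈ Ioi k1, z l) + z i else 0))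
        + ∑ j ∈ Ioi i, z j * (-(c0 i) * ((if j < k3 then (1:F) else 0) - (if j < k1 then (1:F) else 0))
            - c1 i * (if j < k4 then (1:F) else 0))) := by
        refine Finset.sum_congr rfl fun i _ => ?_
        rw [Finset.sum_congr rfl fun j _ => stepA i j, stepB i]
    _ = 0 := by
        rw [Finset.sum_add_distrib, Finset.sum_add_distrib, Finset.sum_sub_distrib,
          hS1, hS2, hS3, hS4, fIoi1,
          Finset.sum_insert (by
            simp only [Finset.mem_insert, Finset.mem_Ioi]
            push_neg
            exact ⟨hne23, not_lt.mp h32⟩),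
          Finset.sum_insert (by simp)]
        ring

end Aux

/-- for `n ≥ 5` the matrix `counterB` has rank `2`, yet
`λ ↦ cullisDet (A + λ • counterB)` has degree at most `1` for every `A`. -/
theorem counterB_rank_two_deg_le_one {F : Type*} [Field F] (n : ℕ) (hn : 5 ≤ n) :
    (counterB F n).rank = 2 ∧
    ∀ A : Matrix (Fin n) (Fin 3) F, ∃ a₀ a₁ : F, ∀ lam : F,
      cullisDet (A + lam • counterB F n) = a₀ + a₁ * lam := by
  constructor
  · -- rank part
    classical
    set v0 : Fin n → F := fun i => if (i : ℕ) = 0 then 1 else if (i : ℕ) = 4 then -1 else 0 with hv0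
    set v1 : Fin n → F := fun i => if (i : ℕ) = 1 then 1 else if (i : ℕ) = 3 then -1 else 0 with hv1
    have hT0 : (counterB F n).transpose 0 = v0 := by
      funext i; simp [counterB, Matrix.transpose_apply, hv0]
    have hT1 : (counterB F n).transpose 1 = v1 := by
      funext i; simp [counterB, Matrix.transpose_apply, hv1]
    have hT2 : (counterB F n).transpose 2 = 0 := by
      funext i; simp [counterB, Matrix.transpose_apply]
    have hind : LinearIndependent F ![v0, v1] := by
      rw [LinearIndependent.pair_iff]
      intro s t hst
      have h0 := congrFun hst ⟨0, by omega⟩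
      have h1 := congrFun hst ⟨1, by omega⟩
      simp [hv0, hv1] at h0 h1
      exact ⟨h0, h1⟩
    have hspan : Submodule.span F (Set.range (counterB F n).transpose)
        = Submodule.span F (Set.range ![v0, v1]) := by
      apply le_antisymm
      · rw [Submodule.span_le]
        rintro x ⟨j, rfl⟩
        fin_cases j
        · show (counterB F n).transpose 0 ∈ _
          rw [hT0]; exact Submodule.subset_span ⟨0, rfl⟩
        · show (counterB F n).transpose 1 ∈ _
          rw [hT1]; exact Submodule.subset_span ⟨1, rfl⟩
        · show (counterB F n).transpose 2 ∈ _
          rw [hT2]; exact Submodule.zero_mem _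
      · rw [Submodule.span_le]
        rintro x ⟨j, rfl⟩
        fin_cases j
        · show (![v0, v1] : Fin 2 → Fin n → F) 0 ∈ _
          rw [show (![v0, v1] : Fin 2 → Fin n → F) 0 = (counterB F n).transpose 0 from hT0.symm]
          exact Submodule.subset_span ⟨0, rfl⟩
        · show (![v0, v1] : Fin 2 → Fin n → F) 1 ∈ _
          rw [show (![v0, v1] : Fin 2 → Fin n → F) 1 = (counterB F n).transpose 1 from hT1.symm]
          exact Submodule.subset_span ⟨1, rfl⟩
    rw [Matrix.rank_eq_finrank_span_cols,
      show (counterB F n).col = (counterB F n).transpose from rfl, hspan, finrank_span_eq_card hind]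
    rfl
  · -- degree part
    intro A
    classical
    let k0 : Fin n := ⟨0, by omega⟩
    let k1 : Fin n := ⟨1, by omega⟩
    let k2 : Fin n := ⟨2, by omega⟩
    let k3 : Fin n := ⟨3, by omega⟩
    let k4 : Fin n := ⟨4, by omega⟩
    let c0 : Fin n → F := fun i => if i = k0 then 1 else if i = k4 then -1 else 0
    let c1 : Fin n → F := fun i => if i = k1 then -1 else if i = k3 then 1 else 0
    let z : Fin n → F := fun i => (-1 : F) ^ (i : ℕ) * A i 2
    let D2 : (Fin 3 → Fin n) → F := fun f =>
      (counterB F n (f 0) 0 * counterB F n (f 1) 1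
          - counterB F n (f 0) 1 * counterB F n (f 1) 0) * A (f 2) 2
      - (counterB F n (f 0) 0 * counterB F n (f 2) 1
          - counterB F n (f 0) 1 * counterB F n (f 2) 0) * A (f 1) 2
      + (counterB F n (f 1) 0 * counterB F n (f 2) 1
          - counterB F n (f 1) 1 * counterB F n (f 2) 0) * A (f 0) 2
    have hB2 : ∀ i : Fin n, counterB F n i 2 = 0 := fun i => by simp [counterB]
    have hc0eps : ∀ i : Fin n, (-1 : F) ^ (i : ℕ) * counterB F n i 0 = c0 i := by
      intro i
      by_cases h0 : (i : ℕ) = 0 <;> by_cases h4 : (i : ℕ) = 4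
      · omega
      all_goals simp [counterB, c0, k0, k4, h0, h4, Fin.ext_iff] <;> norm_num
    have hc1eps : ∀ i : Fin n, (-1 : F) ^ (i : ℕ) * counterB F n i 1 = c1 i := by
      intro i
      by_cases h1 : (i : ℕ) = 1 <;> by_cases h3 : (i : ℕ) = 3
      · omega
      all_goals simp [counterB, c1, k1, k3, h1, h3, Fin.ext_iff, pow_succ] <;> norm_num
    have hdet : ∀ (lam : F) (f : Fin 3 → Fin n),
        ((A + lam • counterB F n).submatrix f id).det
          = (A.submatrix f id).det
            + (((A + counterB F n).submatrix f id).det - (A.submatrix f id).det - D2 f) * lam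
            + (D2 f) * lam ^ 2 := by
      intro lam f
      simp only [Matrix.det_fin_three, Matrix.submatrix_apply, Matrix.add_apply,
        Matrix.smul_apply, smul_eq_mul, id_eq, hB2, mul_zero, add_zero, D2]
      ring
    have hsgnD2 : ∀ f : Fin 3 → Fin n,
        (-1 : F) ^ (∑ α : Fin 3, ((f α : ℕ) + (α : ℕ))) * D2 f
          = -((c0 (f 0) * c1 (f 1) - c1 (f 0) * c0 (f 1)) * z (f 2)
              - (c0 (f 0) * c1 (f 2) - c1 (f 0) * c0 (f 2)) * z (f 1)
              + (c0 (f 1) * c1 (f 2) - c1 (f 1) * c0 (f 2)) * z (f 0)) := by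
      intro f
      have hexp : (∑ α : Fin 3, ((f α : ℕ) + (α : ℕ)))
          = (f 0 : ℕ) + ((f 1 : ℕ) + ((f 2 : ℕ) + 3)) := by
        rw [Fin.sum_univ_three]
        simp
        omega
      rw [hexp, pow_add, pow_add, pow_add]
      simp only [← hc0eps, ← hc1eps, z, D2]
      norm_num
      ring
    have hquad := quad_zero k0 k1 k2 k3 k4 rfl rfl rfl rfl rfl z c0 c1
      (fun i => rfl) (fun i => rfl)
    have key : (∑ f ∈ Finset.univ.filter (fun f : Fin 3 → Fin n => StrictMono f),
        (-1 : F) ^ (∑ α : Fin 3, ((f α : ℕ) + (α : ℕ))) * D2 f) = 0 := by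
      rw [Finset.sum_congr rfl fun f _ => hsgnD2 f, Finset.sum_neg_distrib]
      have h := sum_strictMono_fin3 (M := F) (n := n)
        (fun i j l => (c0 i * c1 j - c1 i * c0 j) * z l
          - (c0 i * c1 l - c1 i * c0 l) * z j
          + (c0 j * c1 l - c1 j * c0 l) * z i)
      beta_reduce at h
      rw [h, hquad, neg_zero]
    refine ⟨cullisDet A, cullisDet (A + counterB F n) - cullisDet A, fun lam => ?_⟩
    simp only [cullisDet]
    rw [Finset.sum_congr rfl fun f _ => (by rw [hdet lam f]; ring :
      (-1 : F) ^ (∑ α : Fin 3, ((f α : ℕ) + (α : ℕ))) * ((A + lam • counterB F n).submatrix f id).det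
        = (-1 : F) ^ (∑ α : Fin 3, ((f α : ℕ) + (α : ℕ))) * (A.submatrix f id).det
          + ((-1 : F) ^ (∑ α : Fin 3, ((f α : ℕ) + (α : ℕ))) * ((A + counterB F n).submatrix f id).det
              - (-1 : F) ^ (∑ α : Fin 3, ((f α : ℕ) + (α : ℕ))) * (A.submatrix f id).det
              - (-1 : F) ^ (∑ α : Fin 3, ((f α : ℕ) + (α : ℕ))) * D2 f) * lam
          + ((-1 : F) ^ (∑ α : Fin 3, ((f α : ℕ) + (α : ℕ))) * D2 f) * lam ^ 2)]
    rw [Finset.sum_add_distrib, Finset.sum_add_distrib, ← Finset.sum_mul, ← Finset.sum_mul,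
      Finset.sum_sub_distrib, Finset.sum_sub_distrib, key]
    ring
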